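/- Let a > 0 and ρ ∈ [0,1), and for n ∈ ℤ define fₙ : ℝ → ℂ by fₙ(t) = e^{-at + 2π(n+ρ)it} 𝟙_{[0,∞)}(t), so fₙ ∈ L²(ℝ;ℂ). Then (fₙ)_{n∈ℤ} is a Riesz sequence in L²(ℝ): for every finitely supported family (cₙ)_{n∈ℤ} of complex numbers, (e^{-2a}/(e^{2a}-1)) Σ_{n∈ℤ} |cₙ|² ≤ ‖Σ_{n∈ℤ} cₙ fₙ‖²_{L²(ℝ)} ≤ (e^{2a}/(e^{2a}-1)) Σ_{n∈ℤ} |cₙ|². -/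

import Mathlib

open MeasureTheory Complex Set

noncomputable section

set_option maxHeartbeats 1000000


lemma exp_ortho (x : ℝ) {k : ℤ} (hk : k ≠ 0) :
    ∫ t in x..(x+1), Complex.exp (2 * Real.pi * (k:ℝ) * Complex.I * t) = 0 := by
  have hc : (2 * (Real.pi:ℂ) * ((k:ℝ):ℂ) * Complex.I) ≠ 0 := by
    simp [Real.pi_ne_zero, Complex.I_ne_zero, hk]
  rw [integral_exp_mul_complex hc]
  have h1 : Complex.exp (2 * (Real.pi:ℂ) * ((k:ℝ):ℂ) * Complex.I * ((x:ℂ)+1))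
      = Complex.exp (2 * (Real.pi:ℂ) * ((k:ℝ):ℂ) * Complex.I * x) := by
    rw [mul_add, mul_one, Complex.exp_add]
    have h2 := Complex.exp_int_mul_two_pi_mul_I k
    have : Complex.exp (2 * (Real.pi:ℂ) * ((k:ℝ):ℂ) * Complex.I) = 1 := by
      rw [← h2]; push_cast; ring_nf
    rw [this, mul_one]
  push_cast at h1 ⊢
  rw [h1, sub_self, zero_div]

lemma parseval (ρ x : ℝ) (s : Finset ℤ) (c : ℤ → ℂ) :
    ∫ t in x..(x+1), ‖∑ n ∈ s, c n * Complex.exp (2 * (Real.pi:ℂ) * (((n:ℝ):ℂ) + (ρ:ℂ)) * Complex.I * (t:ℂ))‖^2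
      = ∑ n ∈ s, ‖c n‖^2 := by
  set e : ℤ → ℝ → ℂ := fun n t => Complex.exp (2 * (Real.pi:ℂ) * (((n:ℝ):ℂ) + (ρ:ℂ)) * Complex.I * (t:ℂ)) with he
  have hcont : ∀ n : ℤ, Continuous (e n) := by
    intro n
    exact Complex.continuous_exp.comp (by continuity)
  have key : (fun t : ℝ => ((‖∑ n ∈ s, c n * e n t‖^2 : ℝ) : ℂ))
      = fun t : ℝ => ∑ n ∈ s, ∑ m ∈ s, (c n * (starRingEnd ℂ) (c m))
          * Complex.exp (2 * Real.pi * ((n - m : ℤ):ℝ) * Complex.I * (t:ℂ)) := by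
    funext t
    have h1 : ((‖∑ n ∈ s, c n * e n t‖^2 : ℝ) : ℂ)
        = (∑ n ∈ s, c n * e n t) * (starRingEnd ℂ) (∑ m ∈ s, c m * e m t) := by
      rw [Complex.mul_conj]
      norm_cast
      simp [Complex.normSq_eq_norm_sq]
    rw [h1, map_sum, Finset.sum_mul_sum]
    refine Finset.sum_congr rfl fun n _ => Finset.sum_congr rfl fun m _ => ?_
    have hconj : (starRingEnd ℂ) (c m * e m t)
        = (starRingEnd ℂ) (c m) * Complex.exp (-(2 * Real.pi * ((m:ℝ) + ρ) * Complex.I * t)) := by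
      rw [map_mul, ← Complex.exp_conj]
      congr 1
      simp only [he, map_mul, map_add, map_ofNat, Complex.conj_I, Complex.conj_ofReal]
      ring
    rw [hconj, he]
    rw [show c n * Complex.exp (2 * Real.pi * ((n:ℝ) + ρ) * Complex.I * t)
          * ((starRingEnd ℂ) (c m) * Complex.exp (-(2 * Real.pi * ((m:ℝ) + ρ) * Complex.I * t)))
        = c n * (starRingEnd ℂ) (c m)
          * (Complex.exp (2 * Real.pi * ((n:ℝ) + ρ) * Complex.I * t)
             * Complex.exp (-(2 * Real.pi * ((m:ℝ) + ρ) * Complex.I * t))) from by ring]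
    rw [← Complex.exp_add]
    congr 2
    push_cast
    ring
  have hint : ∀ n m : ℤ, IntervalIntegrable
      (fun t : ℝ => (c n * (starRingEnd ℂ) (c m))
        * Complex.exp (2 * Real.pi * ((n - m : ℤ):ℝ) * Complex.I * (t:ℂ))) volume x (x+1) := by
    intro n m
    exact (Continuous.mul continuous_const
      (Complex.continuous_exp.comp (by continuity))).intervalIntegrable _ _
  have hC : (∫ t in x..(x+1), ((‖∑ n ∈ s, c n * e n t‖^2 : ℝ) : ℂ))
      = ∑ n ∈ s, (‖c n‖^2 : ℂ) := by
    rw [key]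
    rw [intervalIntegral.integral_finset_sum
      (f := fun n (t:ℝ) => ∑ m ∈ s, (c n * (starRingEnd ℂ) (c m))
        * Complex.exp (2 * Real.pi * ((n - m : ℤ):ℝ) * Complex.I * (t:ℂ)))
      (fun n _ => by
        apply Continuous.intervalIntegrable
        exact continuous_finset_sum s (fun m _ => Continuous.mul continuous_const
          (Complex.continuous_exp.comp (by continuity))))]
    refine Finset.sum_congr rfl fun n hn => ?_
    rw [intervalIntegral.integral_finset_sum
      (f := fun m (t:ℝ) => (c n * (starRingEnd ℂ) (c m))
        * Complex.exp (2 * Real.pi * ((n - m : ℤ):ℝ) * Complex.I * (t:ℂ)))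
      (fun m _ => hint n m)]
    have hterm : ∀ m ∈ s, (∫ t in x..(x+1), (c n * (starRingEnd ℂ) (c m))
        * Complex.exp (2 * Real.pi * ((n - m : ℤ):ℝ) * Complex.I * (t:ℂ)))
        = if m = n then (‖c n‖^2 : ℂ) else 0 := by
      intro m _
      rw [intervalIntegral.integral_const_mul]
      by_cases hmn : m = n
      · subst hmn
        simp only [sub_self, Int.cast_zero, Complex.ofReal_zero, mul_zero, zero_mul,
          Complex.exp_zero, if_pos rfl]
        rw [intervalIntegral.integral_const]
        simp [Complex.mul_conj, Complex.normSq_eq_norm_sq]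
      · rw [exp_ortho x (sub_ne_zero.mpr (fun h => hmn h.symm)), mul_zero, if_neg hmn]
    rw [Finset.sum_congr rfl hterm, Finset.sum_ite_eq' s n (fun _ => (‖c n‖^2 : ℂ)), if_pos hn]
  rw [intervalIntegral.integral_ofReal] at hC
  have h4 : ((∑ n ∈ s, ‖c n‖^2 : ℝ) : ℂ) = ∑ n ∈ s, (‖c n‖^2 : ℂ) := by push_cast; ring
  rw [← h4] at hC
  exact Complex.ofReal_injective hC

lemma union_Ioc : Ioi (0:ℝ) = ⋃ k : ℕ, Ioc (k:ℝ) ((k:ℝ)+1) := by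
  ext t
  simp only [mem_Ioi, mem_iUnion, mem_Ioc]
  constructor
  · intro ht
    have h2 : 0 < ⌈t⌉ := Int.lt_ceil.mpr (by exact_mod_cast ht)
    refine ⟨(⌈t⌉ - 1).toNat, ?_, ?_⟩
    · have hcast : (((⌈t⌉ - 1).toNat : ℤ) : ℝ) = (⌈t⌉:ℝ) - 1 := by
        rw [Int.toNat_of_nonneg (by omega)]; push_cast; ring
      have := Int.ceil_lt_add_one t
      push_cast at hcast ⊢
      rw [hcast]
      push_cast at this
      linarith
    · have hcast : (((⌈t⌉ - 1).toNat : ℤ) : ℝ) = (⌈t⌉:ℝ) - 1 := by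
        rw [Int.toNat_of_nonneg (by omega)]; push_cast; ring
      have := Int.le_ceil t
      push_cast at hcast ⊢
      rw [hcast]
      push_cast at this
      linarith
  · rintro ⟨k, hk1, _⟩
    exact lt_of_le_of_lt (Nat.cast_nonneg k) hk1

lemma pairwise_disjoint_Ioc : Pairwise (Function.onFun Disjoint (fun k : ℕ => Ioc (k:ℝ) ((k:ℝ)+1))) := by
  intro k l hkl
  rw [Function.onFun, Set.disjoint_left]
  rintro x ⟨h1, h2⟩ ⟨h3, h4⟩
  rcases hkl.lt_or_gt with h | h
  · have : (k:ℝ) + 1 ≤ l := by exact_mod_cast h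
    linarith
  · have : (l:ℝ) + 1 ≤ k := by exact_mod_cast h
    linarith

/-- The functions `fₙ(t) = e^{-at + 2π(n+ρ)it} 𝟙_{[0,∞)}(t)`. -/
def rieszFun (a ρ : ℝ) (n : ℤ) : ℝ → ℂ :=
  Set.indicator (Set.Ici (0 : ℝ))
    (fun t : ℝ => Complex.exp ((-(a : ℂ) + 2 * Real.pi * ((n : ℝ) + ρ) * Complex.I) * t))

/-- For `a > 0` and `ρ ∈ [0,1)`, the functions
`fₙ(t) = e^{-at + 2π(n+ρ)it} 𝟙_{[0,∞)}(t)` belong to `L²(ℝ;ℂ)` and form a Riesz sequence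
in `L²(ℝ)`: for every finitely supported family `(cₙ)_{n∈ℤ}` of complex numbers,
`(e^{-2a}/(e^{2a}-1)) ∑ₙ |cₙ|² ≤ ‖∑ₙ cₙ fₙ‖²_{L²(ℝ)} ≤ (e^{2a}/(e^{2a}-1)) ∑ₙ |cₙ|²`. -/
theorem stochastic_datko_pazy_stmt11
    (a ρ : ℝ) (ha : 0 < a) (hρ : ρ ∈ Set.Ico (0 : ℝ) 1) :
    (∀ n : ℤ, MemLp (rieszFun a ρ n) 2 volume) ∧
    ∀ (s : Finset ℤ) (c : ℤ → ℂ),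
      (Real.exp (-(2 * a)) / (Real.exp (2 * a) - 1)) * ∑ n ∈ s, ‖c n‖ ^ 2
          ≤ ∫ t : ℝ, ‖∑ n ∈ s, c n * rieszFun a ρ n t‖ ^ 2 ∧
      ∫ t : ℝ, ‖∑ n ∈ s, c n * rieszFun a ρ n t‖ ^ 2
          ≤ (Real.exp (2 * a) / (Real.exp (2 * a) - 1)) * ∑ n ∈ s, ‖c n‖ ^ 2 := by
  have h2a : (0:ℝ) < 2 * a := by linarith
  set r : ℝ := Real.exp (-(2*a)) with hrdef
  have hr0 : 0 < r := Real.exp_pos _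
  have hr1 : r < 1 := Real.exp_lt_one_iff.mpr (by linarith)
  have hE1 : (1:ℝ) < Real.exp (2*a) := Real.one_lt_exp_iff.mpr h2a
  have hEpos : 0 < Real.exp (2*a) - 1 := by linarith
  -- norm squared of rieszFun-type sums, pointwise
  have hnormexp : ∀ (n : ℤ) (t : ℝ),
      ‖Complex.exp (2 * (Real.pi:ℂ) * (((n:ℝ):ℂ) + (ρ:ℂ)) * Complex.I * (t:ℂ))‖ = 1 := by
    intro n t
    rw [Complex.norm_exp]
    have : (2 * (Real.pi:ℂ) * (((n:ℝ):ℂ) + (ρ:ℂ)) * Complex.I * (t:ℂ)).re = 0 := by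
      simp [Complex.mul_re, Complex.add_re, Complex.add_im, Complex.I_re, Complex.I_im,
        Complex.ofReal_re, Complex.ofReal_im]
    rw [this, Real.exp_zero]
  have hriesz : ∀ (n : ℤ) (t : ℝ), t ∈ Ici (0:ℝ) →
      rieszFun a ρ n t = Complex.exp (-(a:ℂ) * t)
        * Complex.exp (2 * (Real.pi:ℂ) * (((n:ℝ):ℂ) + (ρ:ℂ)) * Complex.I * (t:ℂ)) := by
    intro n t ht
    rw [rieszFun, Set.indicator_of_mem ht, ← Complex.exp_add]
    congr 1
    push_cast
    ring
  have hrieszsq : ∀ (n : ℤ) (t : ℝ),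
      ‖rieszFun a ρ n t‖^2 = Set.indicator (Ici (0:ℝ)) (fun t => Real.exp (-(2*a)*t)) t := by
    intro n t
    by_cases ht : t ∈ Ici (0:ℝ)
    · rw [hriesz n t ht, Set.indicator_of_mem ht, norm_mul, hnormexp, mul_one,
        Complex.norm_exp]
      have h1 : (-(a:ℂ) * (t:ℂ)).re = -a * t := by
        simp [Complex.mul_re]
      rw [h1, sq, ← Real.exp_add]
      ring_nf
    · rw [rieszFun, Set.indicator_of_notMem ht, Set.indicator_of_notMem ht, norm_zero]
      exact zero_pow two_ne_zero
  constructor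
  · -- Memℒp
    intro n
    have hmeas : AEStronglyMeasurable (rieszFun a ρ n) volume := by
      apply AEStronglyMeasurable.indicator _ measurableSet_Ici
      exact (Complex.continuous_exp.comp (by continuity)).aestronglyMeasurable
    rw [memLp_two_iff_integrable_sq_norm hmeas]
    have heq : (fun t => ‖rieszFun a ρ n t‖^2)
        = Set.indicator (Ici (0:ℝ)) (fun t => Real.exp (-(2*a)*t)) := funext (hrieszsq n)
    rw [heq, integrable_indicator_iff measurableSet_Ici]
    exact Iff.mpr integrableOn_Ici_iff_integrableOn_Ioi (exp_neg_integrableOn_Ioi 0 h2a)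
  · intro s c
    set S : ℝ := ∑ n ∈ s, ‖c n‖^2 with hS
    have hS0 : 0 ≤ S := Finset.sum_nonneg fun n _ => sq_nonneg _
    set g : ℝ → ℂ := fun t => ∑ n ∈ s,
      c n * Complex.exp (2 * (Real.pi:ℂ) * (((n:ℝ):ℂ) + (ρ:ℂ)) * Complex.I * (t:ℂ)) with hg
    have hgcont : Continuous g := continuous_finset_sum _ fun n _ =>
      continuous_const.mul (Complex.continuous_exp.comp (by continuity))
    set M : ℝ := ∑ n ∈ s, ‖c n‖ with hM
    have hgle : ∀ t, ‖g t‖ ≤ M := by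
      intro t
      refine (norm_sum_le _ _).trans ?_
      apply Finset.sum_le_sum
      intro n hn
      rw [norm_mul, hnormexp, mul_one]
    set f : ℝ → ℝ := fun t => Real.exp (-(2*a)*t) * ‖g t‖^2 with hf
    have hfcont : Continuous f :=
      (Real.continuous_exp.comp (by continuity)).mul ((hgcont.norm).pow 2)
    have hf0 : ∀ t, 0 ≤ f t := fun t => mul_nonneg (Real.exp_pos _).le (sq_nonneg _)
    -- pointwise identity
    have hpt : ∀ t : ℝ, ‖∑ n ∈ s, c n * rieszFun a ρ n t‖^2
        = Set.indicator (Ici (0:ℝ)) f t := by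
      intro t
      by_cases ht : t ∈ Ici (0:ℝ)
      · rw [Set.indicator_of_mem ht]
        have : ∑ n ∈ s, c n * rieszFun a ρ n t = Complex.exp (-(a:ℂ) * t) * g t := by
          rw [hg, Finset.mul_sum]
          refine Finset.sum_congr rfl fun n hn => ?_
          rw [hriesz n t ht]
          ring
        rw [this, norm_mul, Complex.norm_exp]
        have h1 : (-(a:ℂ) * (t:ℂ)).re = -a * t := by simp [Complex.mul_re]
        rw [h1, hf, mul_pow, sq (Real.exp (-a*t)), ← Real.exp_add]
        ring_nf
      · rw [Set.indicator_of_notMem ht]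
        have : ∑ n ∈ s, c n * rieszFun a ρ n t = 0 := by
          apply Finset.sum_eq_zero
          intro n _
          rw [rieszFun, Set.indicator_of_notMem ht, mul_zero]
        rw [this, norm_zero]
        exact zero_pow two_ne_zero
    -- Parseval on each interval
    have hpar : ∀ x : ℝ, ∫ t in x..(x+1), ‖g t‖^2 = S := by
      intro x
      rw [hg, hS]
      exact parseval ρ x s c
    -- integrability on Ioi 0
    have hfint : IntegrableOn f (Ioi (0:ℝ)) volume := by
      apply Integrable.mono' ((exp_neg_integrableOn_Ioi 0 h2a).const_mul (M^2))
      · exact hfcont.aestronglyMeasurable.restrict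
      · filter_upwards with t
        rw [Real.norm_eq_abs, _root_.abs_of_nonneg (hf0 t)]
        calc f t ≤ Real.exp (-(2*a)*t) * M^2 := by
              apply mul_le_mul_of_nonneg_left _ (Real.exp_pos _).le
              have := hgle t
              have h0 : 0 ≤ ‖g t‖ := norm_nonneg _
              nlinarith
          _ = M^2 * Real.exp (-(2*a)*t) := by ring
    -- decomposition
    have hdec : ∫ t in Ioi (0:ℝ), f t = ∑' k : ℕ, ∫ t in Ioc (k:ℝ) ((k:ℝ)+1), f t := by
      rw [union_Ioc] at hfint ⊢
      exact integral_iUnion (fun k => measurableSet_Ioc) pairwise_disjoint_Ioc hfint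
    have hIoc : ∀ k : ℕ, ∫ t in Ioc (k:ℝ) ((k:ℝ)+1), f t = ∫ t in (k:ℝ)..((k:ℝ)+1), f t := by
      intro k
      rw [intervalIntegral.integral_of_le (by linarith)]
    -- upper and lower bounds per interval
    have hup : ∀ k : ℕ, ∫ t in (k:ℝ)..((k:ℝ)+1), f t ≤ r^k * S := by
      intro k
      have hb : Real.exp (-(2*a)*(k:ℝ)) = r^k := by
        rw [hrdef, ← Real.exp_nat_mul]
        congr 1
        ring
      calc ∫ t in (k:ℝ)..((k:ℝ)+1), f t
          ≤ ∫ t in (k:ℝ)..((k:ℝ)+1), Real.exp (-(2*a)*(k:ℝ)) * ‖g t‖^2 := by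
            apply intervalIntegral.integral_mono_on (by linarith)
              (hfcont.intervalIntegrable _ _)
              ((continuous_const.mul ((hgcont.norm).pow 2)).intervalIntegrable _ _)
            intro x hx
            apply mul_le_mul_of_nonneg_right _ (sq_nonneg _)
            apply Real.exp_le_exp.mpr
            have := hx.1
            nlinarith
        _ = r^k * S := by
            rw [intervalIntegral.integral_const_mul, hpar, hb]
    have hlo : ∀ k : ℕ, r^(k+1) * S ≤ ∫ t in (k:ℝ)..((k:ℝ)+1), f t := by
      intro k
      have hb : Real.exp (-(2*a)*((k:ℝ)+1)) = r^(k+1) := by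
        rw [hrdef, ← Real.exp_nat_mul]
        congr 1
        push_cast
        ring
      calc r^(k+1) * S
          = ∫ t in (k:ℝ)..((k:ℝ)+1), Real.exp (-(2*a)*((k:ℝ)+1)) * ‖g t‖^2 := by
            rw [intervalIntegral.integral_const_mul, hpar, hb]
        _ ≤ ∫ t in (k:ℝ)..((k:ℝ)+1), f t := by
            apply intervalIntegral.integral_mono_on (by linarith)
              ((continuous_const.mul ((hgcont.norm).pow 2)).intervalIntegrable _ _)
              (hfcont.intervalIntegrable _ _)
            intro x hx
            apply mul_le_mul_of_nonneg_right _ (sq_nonneg _)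
            apply Real.exp_le_exp.mpr
            have := hx.2
            nlinarith
    -- summability
    have hgeo : Summable (fun k : ℕ => r^k) := summable_geometric_of_lt_one hr0.le hr1
    have hsum_up : Summable (fun k : ℕ => r^k * S) := hgeo.mul_right S
    have hsum_lo : Summable (fun k : ℕ => r^(k+1) * S) := by
      have : (fun k : ℕ => r^(k+1) * S) = (fun k : ℕ => r * (r^k * S)) := by
        funext k; ring
      rw [this]
      exact hsum_up.mul_left r
    have hmid_nonneg : ∀ k : ℕ, 0 ≤ ∫ t in (k:ℝ)..((k:ℝ)+1), f t := by
      intro k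
      apply intervalIntegral.integral_nonneg (by linarith)
      intro x _
      exact hf0 x
    have hsum_mid : Summable (fun k : ℕ => ∫ t in (k:ℝ)..((k:ℝ)+1), f t) :=
      Summable.of_nonneg_of_le hmid_nonneg hup hsum_up
    -- total integral
    have htot : ∫ t : ℝ, ‖∑ n ∈ s, c n * rieszFun a ρ n t‖^2
        = ∑' k : ℕ, ∫ t in (k:ℝ)..((k:ℝ)+1), f t := by
      rw [show (fun t : ℝ => ‖∑ n ∈ s, c n * rieszFun a ρ n t‖^2)
          = Set.indicator (Ici (0:ℝ)) f from funext hpt]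
      rw [integral_indicator measurableSet_Ici, integral_Ici_eq_integral_Ioi, hdec]
      exact tsum_congr hIoc
    -- geometric sums
    have htsum_up : ∑' k : ℕ, r^k * S = (1 - r)⁻¹ * S := by
      rw [tsum_mul_right, tsum_geometric_of_lt_one hr0.le hr1]
    have htsum_lo : ∑' k : ℕ, r^(k+1) * S = r * ((1 - r)⁻¹ * S) := by
      have h1 : (fun k : ℕ => r^(k+1) * S) = (fun k : ℕ => r * (r^k * S)) := by
        funext k; ring
      rw [h1, tsum_mul_left, htsum_up]
    have hinv : (1 - r)⁻¹ = Real.exp (2*a) / (Real.exp (2*a) - 1) := by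
      have h1 : 1 - r = (Real.exp (2*a) - 1) / Real.exp (2*a) := by
        rw [hrdef, Real.exp_neg]
        field_simp
      rw [h1, inv_div]
    constructor
    · -- lower bound
      rw [htot]
      have hprod : r * Real.exp (2*a) = 1 := by
        rw [hrdef, ← Real.exp_add, show -(2*a) + 2*a = 0 by ring, Real.exp_zero]
      have h1 : r / (Real.exp (2*a) - 1) * S ≤ r * ((1 - r)⁻¹ * S) := by
        rw [hinv]
        have h2 : r * (Real.exp (2*a) / (Real.exp (2*a) - 1) * S)
            = 1 / (Real.exp (2*a) - 1) * S := by
          rw [← mul_assoc, mul_div_assoc', hprod]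
        rw [h2]
        apply mul_le_mul_of_nonneg_right _ hS0
        rw [div_le_div_iff₀ hEpos hEpos]
        nlinarith
      rw [← htsum_lo] at h1
      exact h1.trans (Summable.tsum_le_tsum hlo hsum_lo hsum_mid)
    · -- upper bound
      rw [htot]
      refine le_trans (Summable.tsum_le_tsum (fun k => hup k) hsum_mid hsum_up) ?_
      rw [htsum_up, hinv]

end
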